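/- Let d ≥ 1, r an integer with gcd(r, d) = 1, q a multiple of d, and s, α, β complex numbers with Re(s ± α), Re(s ± β) > 1. Then Σ_{m,n ≥ 1, gcd(mn,q)=1} m^{−s−α} n^{−s−β} cos(2πmnr/d) = (1/φ(d)) Σ_{ψ mod d} τ(conj(ψ))·(ψ(r)+ψ(−r))/2 · L_q(s+α, ψ)·L_q(s+β, ψ), where L_q(s, ψ) = Σ_{n ≥ 1, gcd(n,q)=1} ψ(n) n^{−s}. -/

import Mathlib

open Complex Real

/-- Gauss sum `τ(ψ) = ∑_{a=1}^{d} ψ(a) e(a/d)`. -/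
noncomputable def tauSum {d : ℕ} (ψ : DirichletCharacter ℂ d) : ℂ :=
  ∑ a ∈ Finset.range d, ψ (a : ZMod d) * Complex.exp (2 * Real.pi * Complex.I * a / d)

/-- The `L`-series of `ψ` with the Euler factors at primes dividing `q` removed. -/
noncomputable def Lq (q : ℕ) {d : ℕ} (ψ : DirichletCharacter ℂ d) (w : ℂ) : ℂ :=
  ∑' n : ℕ, if 1 ≤ n ∧ Nat.gcd n q = 1 then ψ (n : ZMod d) * (n : ℂ) ^ (-w) else 0

lemma aux_ortho {d : ℕ} [NeZero d] (a b : ZMod d) (hb : IsUnit b) :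
    ∑ ψ : DirichletCharacter ℂ d, (star ψ) a * ψ b
      = if a = b then (d.totient : ℂ) else 0 := by
  by_cases ha : IsUnit a
  · obtain ⟨u, rfl⟩ := ha
    have h1 : ∀ ψ : DirichletCharacter ℂ d, (star ψ) ↑u = ψ ↑u⁻¹ := by
      intro ψ
      have hmul : ψ (↑u⁻¹ : (ZMod d)ˣ) * ψ ↑u = 1 := by
        rw [← map_mul, ← Units.val_mul, inv_mul_cancel, Units.val_one, map_one]
      have hnorm : ‖ψ ↑u‖ = 1 := ψ.unit_norm_eq_one u
      have hne : ψ ↑u ≠ 0 := by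
        intro h; rw [h, norm_zero] at hnorm; norm_num at hnorm
      have h2 : star (ψ ↑u) * ψ ↑u = 1 := by
        rw [RCLike.star_def, ← Complex.normSq_eq_conj_mul_self]
        rw [Complex.normSq_eq_norm_sq]
        simp only [hnorm]
        norm_num
      rw [MulChar.star_apply]
      exact mul_right_cancel₀ hne (h2.trans hmul.symm)
    simp_rw [h1, ← map_mul, DirichletCharacter.sum_characters_eq]
    by_cases hab : (↑u : ZMod d) = b
    · rw [if_pos hab, if_pos (by rw [← hab, ← Units.val_mul, inv_mul_cancel, Units.val_one])]
    · rw [if_neg hab, if_neg]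
      intro h
      apply hab
      calc (↑u : ZMod d) = ↑u * (↑u⁻¹ * b) := by rw [h, mul_one]
        _ = b := by rw [← mul_assoc, ← Units.val_mul, mul_inv_cancel, Units.val_one, one_mul]
  · rw [if_neg (by rintro rfl; exact ha hb)]
    refine Finset.sum_eq_zero fun ψ _ => ?_
    rw [MulChar.star_apply, ψ.map_nonunit ha, star_zero, zero_mul]

lemma aux_exp {d : ℕ} [NeZero d] (b : ℤ) (hb : IsUnit ((b : ℤ) : ZMod d)) :
    ∑ ψ : DirichletCharacter ℂ d, tauSum (star ψ) * ψ ((b : ℤ) : ZMod d)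
      = (d.totient : ℂ) * Complex.exp (2 * Real.pi * Complex.I * b / d) := by
  set B : ZMod d := ((b : ℤ) : ZMod d) with hB
  have hd0 : (d : ℂ) ≠ 0 := Nat.cast_ne_zero.mpr (NeZero.ne d)
  calc ∑ ψ : DirichletCharacter ℂ d, tauSum (star ψ) * ψ B
      = ∑ a ∈ Finset.range d,
          (∑ ψ : DirichletCharacter ℂ d, (star ψ) (a : ZMod d) * ψ B) *
            Complex.exp (2 * Real.pi * Complex.I * a / d) := by
        simp only [tauSum, Finset.sum_mul, Finset.mul_sum]
        rw [Finset.sum_comm]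
        exact Finset.sum_congr rfl fun a _ => Finset.sum_congr rfl fun ψ _ => by ring
    _ = ∑ a ∈ Finset.range d,
          (if (a : ZMod d) = B then (d.totient : ℂ) else 0) *
            Complex.exp (2 * Real.pi * Complex.I * a / d) :=
        Finset.sum_congr rfl fun a _ => by rw [aux_ortho _ B hb]
    _ = (d.totient : ℂ) * Complex.exp (2 * Real.pi * Complex.I * B.val / d) := by
        rw [Finset.sum_eq_single_of_mem B.val (Finset.mem_range.mpr (ZMod.val_lt B))]
        · rw [if_pos (ZMod.natCast_rightInverse B)]
        · intro c hc hne
          rw [if_neg, zero_mul]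
          intro hcB
          exact hne (by rw [← hcB, ZMod.val_cast_of_lt (Finset.mem_range.mp hc)])
    _ = (d.totient : ℂ) * Complex.exp (2 * Real.pi * Complex.I * b / d) := by
        have hdvd : (d : ℤ) ∣ b - (B.val : ℤ) := by
          rw [← ZMod.intCast_zmod_eq_zero_iff_dvd]
          push_cast
          rw [sub_eq_zero, ZMod.natCast_rightInverse B]
        obtain ⟨t, ht⟩ := hdvd
        have hb' : (b : ℂ) = (B.val : ℂ) + (d : ℂ) * t := by
          have h2 : (b : ℤ) = (B.val : ℤ) + d * t := by linarith [ht]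
          exact_mod_cast congrArg (fun z : ℤ => (z : ℂ)) h2
        rw [hb', show 2 * (Real.pi : ℂ) * Complex.I * ((B.val : ℂ) + (d : ℂ) * t) / d
            = 2 * (Real.pi : ℂ) * Complex.I * (B.val : ℂ) / d + t * (2 * Real.pi * Complex.I)
            by field_simp, Complex.exp_add, Complex.exp_int_mul_two_pi_mul_I, mul_one]

theorem double_sum_as_character_sum (d q : ℕ) [NeZero d] (hd : 1 ≤ d) (hdq : d ∣ q)
    (r : ℤ) (hr : Int.gcd r d = 1) (s α β : ℂ)
    (h1 : 1 < (s + α).re) (h2 : 1 < (s - α).re)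
    (h3 : 1 < (s + β).re) (h4 : 1 < (s - β).re) :
    (∑' m : ℕ, ∑' n : ℕ,
        if 1 ≤ m ∧ 1 ≤ n ∧ Nat.gcd (m * n) q = 1 then
          (m : ℂ) ^ (-s - α) * (n : ℂ) ^ (-s - β) *
            Complex.cos (2 * (Real.pi : ℂ) * m * n * r / d)
        else 0) =
      (1 / (Nat.totient d : ℂ)) *
        ∑ᶠ ψ : DirichletCharacter ℂ d,
          tauSum (star ψ) * ((ψ (r : ZMod d) + ψ (-(r : ZMod d))) / 2) *
            Lq q ψ (s + α) * Lq q ψ (s + β) := by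
  have hφ : ((d.totient : ℂ)) ≠ 0 := Nat.cast_ne_zero.mpr (Nat.totient_pos.mpr hd).ne'
  have hru : IsUnit ((r : ℤ) : ZMod d) := by
    obtain ⟨u, v, huv⟩ := Int.isCoprime_iff_gcd_eq_one.mpr hr
    refine IsUnit.of_mul_eq_one ((u : ℤ) : ZMod d) ?_
    have h := congrArg (fun z : ℤ => (z : ZMod d)) huv
    push_cast at h
    rw [ZMod.natCast_self] at h
    rw [mul_comm]
    simpa using h
  set G : DirichletCharacter ℂ d → ℂ → ℕ → ℂ := fun ψ w n =>
    if 1 ≤ n ∧ Nat.gcd n q = 1 then ψ (n : ZMod d) * (n : ℂ) ^ (-w) else 0 with hG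
  set K : DirichletCharacter ℂ d → ℂ := fun ψ =>
    1 / (d.totient : ℂ) *
      (tauSum (star ψ) * ((ψ ((r : ℤ) : ZMod d) + ψ (-((r : ℤ) : ZMod d))) / 2)) with hK
  have hLq : ∀ (ψ : DirichletCharacter ℂ d) (w : ℂ), (∑' n, G ψ w n) = Lq q ψ w :=
    fun ψ w => rfl
  have hsummable : ∀ (ψ : DirichletCharacter ℂ d) (w : ℂ), 1 < w.re →
      Summable (G ψ w) := by
    intro ψ w hw
    have hs : Summable fun n : ℕ => ‖(n : ℂ) ^ (-w)‖ := by
      refine ((Complex.summable_one_div_nat_cpow.mpr hw).norm).congr fun n => ?_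
      rw [Complex.cpow_neg, ← one_div, norm_div, norm_one]
    refine Summable.of_norm_bounded hs fun n => ?_
    rw [hG]
    simp only
    split_ifs with h
    · rw [norm_mul]
      exact mul_le_of_le_one_left (norm_nonneg _) (DirichletCharacter.norm_le_one ψ _)
    · simpa using norm_nonneg ((n : ℂ) ^ (-w))
  have core : ∀ m n : ℕ,
      (if 1 ≤ m ∧ 1 ≤ n ∧ Nat.gcd (m * n) q = 1 then
          (m : ℂ) ^ (-s - α) * (n : ℂ) ^ (-s - β) *
            Complex.cos (2 * (Real.pi : ℂ) * m * n * r / d)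
        else 0)
      = ∑ ψ : DirichletCharacter ℂ d, K ψ * G ψ (s + α) m * G ψ (s + β) n := by
    intro m n
    by_cases h : 1 ≤ m ∧ 1 ≤ n ∧ Nat.gcd (m * n) q = 1
    · obtain ⟨hm1, hn1, hmn⟩ := h
      have hcop : Nat.Coprime m q ∧ Nat.Coprime n q := Nat.coprime_mul_iff_left.mp hmn
      have hmu : IsUnit ((m : ℕ) : ZMod d) :=
        (ZMod.isUnit_iff_coprime m d).mpr (Nat.Coprime.coprime_dvd_right hdq hcop.1)
      have hnu : IsUnit ((n : ℕ) : ZMod d) :=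
        (ZMod.isUnit_iff_coprime n d).mpr (Nat.Coprime.coprime_dvd_right hdq hcop.2)
      set b : ℤ := (m : ℤ) * n * r with hb
      have hbcast : ((b : ℤ) : ZMod d)
          = ((m : ℕ) : ZMod d) * ((n : ℕ) : ZMod d) * ((r : ℤ) : ZMod d) := by
        rw [hb]; push_cast; ring
      have hbcast' : (((-b) : ℤ) : ZMod d)
          = ((m : ℕ) : ZMod d) * ((n : ℕ) : ZMod d) * (-((r : ℤ) : ZMod d)) := by
        rw [hb]; push_cast; ring
      have hbu : IsUnit ((b : ℤ) : ZMod d) := by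
        rw [hbcast]; exact (hmu.mul hnu).mul hru
      have hbu' : IsUnit (((-b) : ℤ) : ZMod d) := by
        rw [hbcast']; exact (hmu.mul hnu).mul hru.neg
      have e1 := aux_exp (d := d) b hbu
      have e2 := aux_exp (d := d) (-b) hbu'
      have E1 : Complex.exp (2 * Real.pi * Complex.I * (b : ℂ) / d)
          = 1 / (d.totient : ℂ) *
            ∑ ψ : DirichletCharacter ℂ d, tauSum (star ψ) * ψ ((b : ℤ) : ZMod d) := by
        rw [e1, one_div, inv_mul_cancel_left₀ hφ]
      have E2 : Complex.exp (2 * Real.pi * Complex.I * ((-b : ℤ) : ℂ) / d)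
          = 1 / (d.totient : ℂ) *
            ∑ ψ : DirichletCharacter ℂ d, tauSum (star ψ) * ψ (((-b) : ℤ) : ZMod d) := by
        rw [e2, one_div, inv_mul_cancel_left₀ hφ]
      have hGm : ∀ ψ : DirichletCharacter ℂ d,
          G ψ (s + α) m = ψ ((m : ℕ) : ZMod d) * (m : ℂ) ^ (-(s + α)) := fun ψ => by
        rw [hG]; exact if_pos ⟨hm1, hcop.1⟩
      have hGn : ∀ ψ : DirichletCharacter ℂ d,
          G ψ (s + β) n = ψ ((n : ℕ) : ZMod d) * (n : ℂ) ^ (-(s + β)) := fun ψ => by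
        rw [hG]; exact if_pos ⟨hn1, hcop.2⟩
      have hcos : Complex.cos (2 * (Real.pi : ℂ) * m * n * r / d)
          = (Complex.exp (2 * Real.pi * Complex.I * (b : ℂ) / d)
            + Complex.exp (2 * Real.pi * Complex.I * ((-b : ℤ) : ℂ) / d)) / 2 := by
        rw [Complex.cos]
        congr 2
        · congr 1
          rw [hb]; push_cast; ring
        · congr 1
          rw [hb]; push_cast; ring
      rw [if_pos ⟨hm1, hn1, hmn⟩, show (-s - α) = -(s + α) by ring,
        show (-s - β) = -(s + β) by ring, hcos, E1, E2, Finset.mul_sum, Finset.mul_sum,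
        ← Finset.sum_add_distrib, Finset.sum_div, Finset.mul_sum]
      refine Finset.sum_congr rfl fun ψ _ => ?_
      rw [hGm ψ, hGn ψ, hK]
      simp only
      rw [hbcast, hbcast', map_mul, map_mul, map_mul, map_mul]
      ring
    · rw [if_neg h]
      symm
      refine Finset.sum_eq_zero fun ψ _ => ?_
      by_cases hm : 1 ≤ m ∧ Nat.gcd m q = 1
      · by_cases hn : 1 ≤ n ∧ Nat.gcd n q = 1
        · exact absurd ⟨hm.1, hn.1, Nat.coprime_mul_iff_left.mpr ⟨hm.2, hn.2⟩⟩ h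
        · rw [hG]; simp only [if_neg hn, mul_zero]
      · rw [hG]; simp only [if_neg hm, mul_zero, zero_mul]
  calc (∑' m : ℕ, ∑' n : ℕ,
        if 1 ≤ m ∧ 1 ≤ n ∧ Nat.gcd (m * n) q = 1 then
          (m : ℂ) ^ (-s - α) * (n : ℂ) ^ (-s - β) *
            Complex.cos (2 * (Real.pi : ℂ) * m * n * r / d)
        else 0)
      = ∑' m : ℕ, ∑' n : ℕ, ∑ ψ : DirichletCharacter ℂ d,
          K ψ * G ψ (s + α) m * G ψ (s + β) n :=
        tsum_congr fun m => tsum_congr fun n => core m n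
    _ = ∑' m : ℕ, ∑ ψ : DirichletCharacter ℂ d,
          K ψ * G ψ (s + α) m * Lq q ψ (s + β) := by
        refine tsum_congr fun m => ?_
        rw [Summable.tsum_finsetSum fun ψ _ => (hsummable ψ (s + β) h3).mul_left _]
        exact Finset.sum_congr rfl fun ψ _ => by rw [tsum_mul_left, hLq]
    _ = ∑ ψ : DirichletCharacter ℂ d,
          K ψ * Lq q ψ (s + α) * Lq q ψ (s + β) := by
        rw [Summable.tsum_finsetSum fun ψ _ =>
          (((hsummable ψ (s + α) h1).mul_left (K ψ)).mul_right (Lq q ψ (s + β)))]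
        refine Finset.sum_congr rfl fun ψ _ => ?_
        calc (∑' m, K ψ * G ψ (s + α) m * Lq q ψ (s + β))
            = ∑' m, (K ψ * Lq q ψ (s + β)) * G ψ (s + α) m :=
              tsum_congr fun m => by ring
          _ = (K ψ * Lq q ψ (s + β)) * ∑' m, G ψ (s + α) m := tsum_mul_left
          _ = K ψ * Lq q ψ (s + α) * Lq q ψ (s + β) := by rw [hLq]; ring
    _ = (1 / (Nat.totient d : ℂ)) *
        ∑ᶠ ψ : DirichletCharacter ℂ d,
          tauSum (star ψ) * ((ψ (r : ZMod d) + ψ (-(r : ZMod d))) / 2) *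
            Lq q ψ (s + α) * Lq q ψ (s + β) := by
        rw [finsum_eq_sum_of_fintype, Finset.mul_sum]
        refine Finset.sum_congr rfl fun ψ _ => ?_
        rw [hK]
        simp only
        ring
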